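/- Let x : ℝ → ℝ be continuously differentiable and 2π-periodic with ∫₀^{2π} x(θ) dθ = 0. Then for every θ ∈ ℝ, |x(θ)|² ≤ π ∫₀^{2π} |x'(s)|² ds; equivalently, sup_{θ ∈ ℝ} |x(θ)|² ≤ π ∫₀^{2π} |x'(s)|² ds. -/

import Mathlib

open Real MeasureTheory

/-- Cauchy–Schwarz for interval integrals of continuous functions. -/
lemma interval_cs (f : ℝ → ℝ) (hf : Continuous f) {a b : ℝ} (hab : a ≤ b) :
    (∫ s in a..b, f s) ^ 2 ≤ (b - a) * ∫ s in a..b, f s ^ 2 := by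
  rcases eq_or_lt_of_le hab with rfl | hab
  · simp
  · set L : ℝ := b - a with hL
    have hL0 : 0 < L := by simp [hL, hab]
    set c : ℝ := (∫ s in a..b, f s) / L with hc
    have hint : IntervalIntegrable f volume a b := hf.intervalIntegrable a b
    have hint2 : IntervalIntegrable (fun s => f s ^ 2) volume a b :=
      (hf.pow 2).intervalIntegrable a b
    have h0 : 0 ≤ ∫ s in a..b, (f s - c) ^ 2 :=
      intervalIntegral.integral_nonneg hab.le (fun t _ => sq_nonneg _)
    have hexp : (∫ s in a..b, (f s - c) ^ 2)
        = (∫ s in a..b, f s ^ 2) - 2 * c * (∫ s in a..b, f s) + c ^ 2 * L := by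
      have : (fun s => (f s - c) ^ 2) = fun s => f s ^ 2 - 2 * c * f s + c ^ 2 := by
        funext s; ring
      rw [this]
      rw [intervalIntegral.integral_add (hint2.sub (hint.const_mul (2*c)))
        intervalIntegrable_const,
        intervalIntegral.integral_sub hint2 (hint.const_mul (2*c)),
        intervalIntegral.integral_const_mul, intervalIntegral.integral_const,
        smul_eq_mul, hL]
      ring
    have hc2 : c * L = ∫ s in a..b, f s := by
      rw [hc, div_mul_cancel₀ _ hL0.ne']
    nlinarith [h0, hexp, sq_nonneg c]

lemma exists_zero_of_mean_zero (x : ℝ → ℝ) (hx : Continuous x)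
    (hmean : (∫ θ in (0:ℝ)..(2 * π), x θ) = 0) :
    ∃ θ₀ ∈ Set.Icc (0:ℝ) (2 * π), x θ₀ = 0 := by
  by_contra h
  push_neg at h
  have hpi : (0:ℝ) < 2 * π := by positivity
  have hint : IntervalIntegrable x volume 0 (2 * π) := hx.intervalIntegrable _ _
  rcases lt_or_gt_of_ne (h 0 ⟨le_refl _, hpi.le⟩) with h0 | h0
  · -- x 0 < 0 : show x < 0 on Icc, integral negative
    have hneg : ∀ t ∈ Set.Icc (0:ℝ) (2 * π), x t < 0 := by
      intro t ht
      rcases lt_or_ge (x t) 0 with h' | h'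
      · exact h'
      · exfalso
        have : (0:ℝ) ∈ Set.Icc (x 0) (x t) := ⟨h0.le, h'⟩
        obtain ⟨u, hu, hxu⟩ := intermediate_value_Icc ht.1 (hx.continuousOn) this
        exact h u ⟨hu.1, hu.2.trans ht.2⟩ hxu
    have : (0:ℝ) < ∫ θ in (0:ℝ)..(2 * π), -x θ := by
      apply intervalIntegral.intervalIntegral_pos_of_pos_on hint.neg
      · intro t ht
        simpa using hneg t ⟨ht.1.le, ht.2.le⟩
      · exact hpi
    rw [intervalIntegral.integral_neg, hmean] at this
    simp at this
  · have hpos : ∀ t ∈ Set.Icc (0:ℝ) (2 * π), 0 < x t := by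
      intro t ht
      rcases lt_or_ge 0 (x t) with h' | h'
      · exact h'
      · exfalso
        have : (0:ℝ) ∈ Set.Icc (x t) (x 0) := ⟨h', h0.le⟩
        obtain ⟨u, hu, hxu⟩ := intermediate_value_Icc' ht.1 (hx.continuousOn) this
        exact h u ⟨hu.1, hu.2.trans ht.2⟩ hxu
    have : (0:ℝ) < ∫ θ in (0:ℝ)..(2 * π), x θ := by
      apply intervalIntegral.intervalIntegral_pos_of_pos_on hint
      · exact fun t ht => hpos t ⟨ht.1.le, ht.2.le⟩
      · exact hpi
    rw [hmean] at this
    exact lt_irrefl _ this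

/-- Sobolev-type sup-norm bound on the torus: a `C¹`, `2π`-periodic, mean-zero
function satisfies `|x θ|² ≤ π ∫₀^{2π} |x'|²` for every `θ`. -/
theorem sq_le_pi_mul_integral_deriv_sq_of_periodic_zero_mean
    (x : ℝ → ℝ) (hx : ContDiff ℝ 1 x)
    (hper : ∀ θ : ℝ, x (θ + 2 * π) = x θ)
    (hmean : (∫ θ in (0:ℝ)..(2 * π), x θ) = 0) :
    ∀ θ : ℝ, |x θ| ^ 2 ≤ π * ∫ s in (0:ℝ)..(2 * π), |deriv x s| ^ 2 := by
  intro θ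
  have hpi : (0:ℝ) < 2 * π := by positivity
  have hxc : Continuous x := hx.continuous
  have hxd : Differentiable ℝ x := hx.differentiable one_ne_zero
  have hdc : Continuous (deriv x) := hx.continuous_deriv le_rfl
  have hPer : Function.Periodic x (2 * π) := hper
  -- the derivative is periodic
  have hdper : Function.Periodic (deriv x) (2 * π) := by
    intro t
    have : (fun s => x (s + 2 * π)) = x := funext hper
    calc deriv x (t + 2 * π) = deriv (fun s => x (s + 2 * π)) t := by
          rw [deriv_comp_add_const]
      _ = deriv x t := by rw [this]
  have hd2per : Function.Periodic (fun s => |deriv x s| ^ 2) (2 * π) := by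
    intro t; simp [hdper t]
  -- zero of x
  obtain ⟨θ₀, hθ₀mem, hθ₀⟩ := exists_zero_of_mean_zero x hxc hmean
  -- reduce θ to a representative in [θ₀, θ₀ + 2π)
  set θ' := toIcoMod hpi θ₀ θ with hθ'
  have hmem : θ' ∈ Set.Ico θ₀ (θ₀ + 2 * π) := toIcoMod_mem_Ico hpi θ₀ θ
  have hxθ' : x θ' = x θ := by
    have : θ' = θ - toIcoDiv hpi θ₀ θ • (2 * π) := rfl
    rw [this, hPer.sub_zsmul_eq]
  -- FTC
  have hftc : ∀ a b : ℝ, x b - x a = ∫ s in a..b, deriv x s := fun a b =>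
    (intervalIntegral.integral_deriv_eq_sub (fun t _ => hxd t)
      (hdc.intervalIntegrable _ _)).symm
  -- the full-period integral of |deriv x|² equals the one over [0, 2π]
  have hIper : (∫ s in θ₀..(θ₀ + 2 * π), |deriv x s| ^ 2)
      = ∫ s in (0:ℝ)..(2 * π), |deriv x s| ^ 2 := by
    have := hd2per.intervalIntegral_add_eq θ₀ 0
    simpa using this
  set I : ℝ := ∫ s in (0:ℝ)..(2 * π), |deriv x s| ^ 2 with hI
  have habs : ∀ a b : ℝ, (∫ s in a..b, (deriv x s) ^ 2) = ∫ s in a..b, |deriv x s| ^ 2 := by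
    intro a b
    apply intervalIntegral.integral_congr
    intro s _
    simp [sq_abs]
  -- nonnegativity for subinterval comparison
  have hsub : ∀ a b : ℝ, θ₀ ≤ a → a ≤ b → b ≤ θ₀ + 2 * π →
      (∫ s in a..b, |deriv x s| ^ 2) ≤ I := by
    intro a b ha hab hb
    rw [← hIper]
    rw [← intervalIntegral.integral_add_adjacent_intervals
        (((show Continuous (fun s => |deriv x s| ^ 2) from hdc.abs.pow 2).intervalIntegrable θ₀ a))
        (((show Continuous (fun s => |deriv x s| ^ 2) from hdc.abs.pow 2).intervalIntegrable a (θ₀ + 2*π)))]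
    rw [← intervalIntegral.integral_add_adjacent_intervals
        (((show Continuous (fun s => |deriv x s| ^ 2) from hdc.abs.pow 2).intervalIntegrable a b))
        (((show Continuous (fun s => |deriv x s| ^ 2) from hdc.abs.pow 2).intervalIntegrable b (θ₀ + 2*π)))]
    have h1 : 0 ≤ ∫ s in θ₀..a, |deriv x s| ^ 2 :=
      intervalIntegral.integral_nonneg ha (fun t _ => by positivity)
    have h2 : 0 ≤ ∫ s in b..(θ₀ + 2*π), |deriv x s| ^ 2 :=
      intervalIntegral.integral_nonneg hb (fun t _ => by positivity)
    linarith
  rw [sq_abs]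
  -- two cases depending on which side of the period θ' falls
  rcases le_or_gt (θ' - θ₀) π with hcase | hcase
  · -- x θ = ∫_{θ₀}^{θ'} deriv x
    have hval : x θ = ∫ s in θ₀..θ', deriv x s := by
      rw [← hxθ']
      have := hftc θ₀ θ'
      rw [hθ₀] at this
      linarith [this]
    have hcs := interval_cs (deriv x) hdc hmem.1
    rw [habs θ₀ θ'] at hcs
    have h1 : (∫ s in θ₀..θ', |deriv x s| ^ 2) ≤ I := hsub θ₀ θ' le_rfl hmem.1 hmem.2.le
    have h2 : 0 ≤ ∫ s in θ₀..θ', |deriv x s| ^ 2 :=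
      intervalIntegral.integral_nonneg hmem.1 (fun t _ => by positivity)
    calc (x θ) ^ 2 = (∫ s in θ₀..θ', deriv x s) ^ 2 := by rw [hval]
      _ ≤ (θ' - θ₀) * ∫ s in θ₀..θ', |deriv x s| ^ 2 := hcs
      _ ≤ π * ∫ s in θ₀..θ', |deriv x s| ^ 2 := by nlinarith
      _ ≤ π * I := by nlinarith [pi_pos]
  · -- x θ = -(∫_{θ'}^{θ₀+2π} deriv x)
    have hb : θ' ≤ θ₀ + 2 * π := hmem.2.le
    have hzero' : x (θ₀ + 2 * π) = 0 := by rw [hper θ₀, hθ₀]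
    have hval : x θ = -(∫ s in θ'..(θ₀ + 2 * π), deriv x s) := by
      rw [← hxθ']
      have := hftc θ' (θ₀ + 2 * π)
      rw [hzero'] at this
      linarith [this]
    have hcs := interval_cs (deriv x) hdc hb
    rw [habs θ' (θ₀ + 2 * π)] at hcs
    have h1 : (∫ s in θ'..(θ₀ + 2 * π), |deriv x s| ^ 2) ≤ I :=
      hsub θ' (θ₀ + 2 * π) hmem.1 hb le_rfl
    have h2 : 0 ≤ ∫ s in θ'..(θ₀ + 2 * π), |deriv x s| ^ 2 :=
      intervalIntegral.integral_nonneg hb (fun t _ => by positivity)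
    calc (x θ) ^ 2 = (∫ s in θ'..(θ₀ + 2 * π), deriv x s) ^ 2 := by rw [hval]; ring
      _ ≤ (θ₀ + 2 * π - θ') * ∫ s in θ'..(θ₀ + 2 * π), |deriv x s| ^ 2 := hcs
      _ ≤ π * ∫ s in θ'..(θ₀ + 2 * π), |deriv x s| ^ 2 := by nlinarith
      _ ≤ π * I := by nlinarith [pi_pos]
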